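/- Variation of the F-functional in the time parameter (the h-term of the first variation formula, Lemma 3.1 of the paper, with the submanifold and base point held fixed): let n be a natural number and let μ be a Borel measure on a finite-dimensional Euclidean space E with polynomial volume growth, i.e. there exist C > 0 and d ≥ 0 with μ(B(0,r)) ≤ C r^d for all r ≥ 1. Then for every fixed x₀ ∈ E, the function t ↦ F^{(n)}_{x₀,t}(μ) is differentiable on (0, ∞), and its derivative at t₀ > 0 equals (4π t₀)^{−n/2} ∫_E ( ‖x − x₀‖² / (4 t₀²) − n / (2 t₀) ) exp( −‖x − x₀‖² / (4 t₀) ) dμ(x). -/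

import Mathlib

open MeasureTheory Real

/-- The (real-valued) `F`-functional with dimension parameter `n` of a Borel measure `μ`
on a finite-dimensional Euclidean space `E`:
`F^{(n)}_{x₀,t₀}(μ) = (4π t₀)^{-n/2} ∫_E exp(-‖x-x₀‖²/(4t₀)) dμ(x)`. -/
noncomputable def FmeasR (n : ℕ) {E : Type*} [NormedAddCommGroup E] [InnerProductSpace ℝ E]
    [MeasurableSpace E] (μ : Measure E) (x₀ : E) (t₀ : ℝ) : ℝ :=
  (4 * Real.pi * t₀) ^ (-(n : ℝ) / 2) *
    ∫ x, Real.exp (-‖x - x₀‖ ^ 2 / (4 * t₀)) ∂μ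


lemma summable_poly_exp (q : ℕ) (c : ℝ) (hc : 0 < c) :
    Summable (fun k : ℕ => ((k:ℝ)+1) ^ q * Real.exp (-c * (k:ℝ)^2)) := by
  have hr : ‖Real.exp (-c)‖ < 1 := by
    rw [Real.norm_eq_abs, abs_of_pos (Real.exp_pos _)]
    exact Real.exp_lt_one_iff.2 (by linarith)
  have h := summable_pow_mul_geometric_of_norm_lt_one (R := ℝ) q hr
  have h1 : Summable (fun k : ℕ => (((k+1:ℕ)):ℝ) ^ q * Real.exp (-c) ^ (k+1)) :=
    (summable_nat_add_iff 1).2 h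
  have h2 : Summable (fun k : ℕ => (((k+1:ℕ)):ℝ) ^ q * Real.exp (-c) ^ (k+1) * (Real.exp (-c))⁻¹) :=
    h1.mul_right _
  refine Summable.of_nonneg_of_le (fun k => by positivity) (fun k => ?_) h2
  have hkk : (k:ℝ) ≤ (k:ℝ)^2 := by
    have : k ≤ k ^ 2 := Nat.le_self_pow two_ne_zero k
    exact_mod_cast this
  have hk2 : Real.exp (-c * (k:ℝ)^2) ≤ Real.exp (-c) ^ k := by
    rw [← Real.exp_nat_mul]
    apply Real.exp_le_exp.2
    have := mul_le_mul_of_nonneg_left hkk hc.le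
    linarith
  have heq : (((k+1:ℕ)):ℝ) ^ q * Real.exp (-c) ^ (k+1) * (Real.exp (-c))⁻¹
      = (((k:ℝ))+1) ^ q * Real.exp (-c) ^ k := by
    have hne : Real.exp (-c) ≠ 0 := (Real.exp_pos _).ne'
    push_cast
    rw [pow_succ, mul_assoc, mul_inv_cancel_right₀ hne]
  rw [heq]
  exact mul_le_mul_of_nonneg_left hk2 (by positivity)

lemma integrable_pow_mul_exp {E : Type*} [NormedAddCommGroup E] [InnerProductSpace ℝ E]
    [FiniteDimensional ℝ E] [MeasurableSpace E] [BorelSpace E]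
    (μ : Measure E) (C d : ℝ) (hC : 0 < C) (hd : 0 ≤ d)
    (hgrowth : ∀ r : ℝ, 1 ≤ r → μ (Metric.closedBall 0 r) ≤ ENNReal.ofReal (C * r ^ d))
    (x₀ : E) (p : ℕ) (c : ℝ) (hc : 0 < c) :
    Integrable (fun x => ‖x - x₀‖ ^ p * Real.exp (-c * ‖x - x₀‖ ^ 2)) μ := by
  have hcont : Continuous (fun x : E => ‖x - x₀‖ ^ p * Real.exp (-c * ‖x - x₀‖ ^ 2)) := by
    fun_prop
  refine ⟨hcont.aestronglyMeasurable, ?_⟩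
  rw [hasFiniteIntegral_iff_norm]
  set s : ℕ → Set E := fun k => Metric.closedBall x₀ ((k:ℝ)+1) \ Metric.ball x₀ (k:ℝ) with hs
  set a : ℕ → ℝ := fun k =>
    (C * ((k:ℝ)+1+‖x₀‖) ^ d) * (((k:ℝ)+1) ^ p * Real.exp (-c * (k:ℝ)^2)) with ha
  have ha_nonneg : ∀ k, 0 ≤ a k := fun k => by
    have : (0:ℝ) ≤ ((k:ℝ)+1+‖x₀‖) ^ d := Real.rpow_nonneg (by positivity) d
    positivity
  have hcover : (Set.univ : Set E) ⊆ ⋃ k : ℕ, s k := by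
    intro x _
    refine Set.mem_iUnion.2 ⟨⌊‖x - x₀‖⌋₊, ?_, ?_⟩
    · rw [Metric.mem_closedBall, dist_eq_norm]
      exact (Nat.lt_floor_add_one _).le
    · rw [Metric.mem_ball, dist_eq_norm, not_lt]
      exact Nat.floor_le (norm_nonneg _)
  calc ∫⁻ x, ENNReal.ofReal ‖‖x - x₀‖ ^ p * Real.exp (-c * ‖x - x₀‖ ^ 2)‖ ∂μ
      ≤ ∫⁻ x in ⋃ k, s k, ENNReal.ofReal ‖‖x - x₀‖ ^ p * Real.exp (-c * ‖x - x₀‖ ^ 2)‖ ∂μ := by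
        rw [← setLIntegral_univ]
        exact lintegral_mono_set hcover
    _ ≤ ∑' k, ∫⁻ x in s k, ENNReal.ofReal ‖‖x - x₀‖ ^ p * Real.exp (-c * ‖x - x₀‖ ^ 2)‖ ∂μ :=
        lintegral_iUnion_le _ _
    _ ≤ ∑' k, ENNReal.ofReal (a k) := by
        refine ENNReal.tsum_le_tsum (fun k => ?_)
        have hsm : MeasurableSet (s k) :=
          measurableSet_closedBall.diff measurableSet_ball
        have hb : ∀ x ∈ s k, ENNReal.ofReal ‖‖x - x₀‖ ^ p * Real.exp (-c * ‖x - x₀‖ ^ 2)‖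
            ≤ ENNReal.ofReal (((k:ℝ)+1) ^ p * Real.exp (-c * (k:ℝ)^2)) := by
          rintro x ⟨hx1, hx2⟩
          rw [Metric.mem_closedBall, dist_eq_norm] at hx1
          rw [Metric.mem_ball, dist_eq_norm, not_lt] at hx2
          apply ENNReal.ofReal_le_ofReal
          rw [norm_mul, norm_pow, norm_norm, Real.norm_eq_abs,
            abs_of_pos (Real.exp_pos _)]
          have h1 : ‖x - x₀‖ ^ p ≤ ((k:ℝ)+1) ^ p :=
            pow_le_pow_left₀ (norm_nonneg _) hx1 p
          have h2 : Real.exp (-c * ‖x - x₀‖ ^ 2) ≤ Real.exp (-c * (k:ℝ)^2) := by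
            apply Real.exp_le_exp.2
            have : (k:ℝ)^2 ≤ ‖x - x₀‖^2 := by
              apply pow_le_pow_left₀ (Nat.cast_nonneg k) hx2
            nlinarith
          exact mul_le_mul h1 h2 (Real.exp_pos _).le (by positivity)
        calc ∫⁻ x in s k, ENNReal.ofReal ‖‖x - x₀‖ ^ p * Real.exp (-c * ‖x - x₀‖ ^ 2)‖ ∂μ
            ≤ ∫⁻ _ in s k, ENNReal.ofReal (((k:ℝ)+1) ^ p * Real.exp (-c * (k:ℝ)^2)) ∂μ :=
              setLIntegral_mono' hsm hb
          _ = ENNReal.ofReal (((k:ℝ)+1) ^ p * Real.exp (-c * (k:ℝ)^2)) * μ (s k) :=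
              setLIntegral_const _ _
          _ ≤ ENNReal.ofReal (((k:ℝ)+1) ^ p * Real.exp (-c * (k:ℝ)^2)) *
                ENNReal.ofReal (C * ((k:ℝ)+1+‖x₀‖) ^ d) := by
              gcongr
              have hsub : s k ⊆ Metric.closedBall 0 ((k:ℝ)+1+‖x₀‖) := by
                rintro x ⟨hx1, _⟩
                rw [Metric.mem_closedBall, dist_eq_norm] at hx1 ⊢
                rw [sub_zero]
                calc ‖x‖ = ‖(x - x₀) + x₀‖ := by rw [sub_add_cancel]
                  _ ≤ ‖x - x₀‖ + ‖x₀‖ := norm_add_le _ _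
                  _ ≤ (k:ℝ)+1+‖x₀‖ := by linarith
              calc μ (s k) ≤ μ (Metric.closedBall 0 ((k:ℝ)+1+‖x₀‖)) := measure_mono hsub
                _ ≤ ENNReal.ofReal (C * ((k:ℝ)+1+‖x₀‖) ^ d) := by
                    apply hgrowth
                    have := norm_nonneg x₀
                    have : (0:ℝ) ≤ (k:ℝ) := Nat.cast_nonneg k
                    linarith [norm_nonneg x₀]
          _ = ENNReal.ofReal (a k) := by
              rw [ha, ← ENNReal.ofReal_mul (by positivity), mul_comm]
    _ < ⊤ := by
        have hsum : Summable a := by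
          set m := ⌈d⌉₊ with hm
          have hsum0 : Summable (fun k : ℕ =>
              (C * (1+‖x₀‖) ^ d) * (((k:ℝ)+1) ^ (m + p) * Real.exp (-c * (k:ℝ)^2))) :=
            (summable_poly_exp (m+p) c hc).mul_left _
          refine Summable.of_nonneg_of_le ha_nonneg (fun k => ?_) hsum0
          have h1 : ((k:ℝ)+1+‖x₀‖) ^ d ≤ (1+‖x₀‖) ^ d * ((k:ℝ)+1) ^ (m : ℕ) := by
            have e1 : ((k:ℝ)+1+‖x₀‖) ^ d ≤ ((1+‖x₀‖) * ((k:ℝ)+1)) ^ d := by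
              apply Real.rpow_le_rpow (by positivity) _ hd
              nlinarith [norm_nonneg x₀, Nat.cast_nonneg (α := ℝ) k]
            have e2 : ((1+‖x₀‖) * ((k:ℝ)+1)) ^ d
                = (1+‖x₀‖) ^ d * ((k:ℝ)+1) ^ d := by
              rw [Real.mul_rpow (by positivity) (by positivity)]
            have e3 : ((k:ℝ)+1) ^ d ≤ ((k:ℝ)+1) ^ (m : ℕ) := by
              rw [← Real.rpow_natCast ((k:ℝ)+1) m]
              apply Real.rpow_le_rpow_of_exponent_le (by linarith [Nat.cast_nonneg (α := ℝ) k])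
              exact Nat.le_ceil d
            calc ((k:ℝ)+1+‖x₀‖) ^ d ≤ (1+‖x₀‖) ^ d * ((k:ℝ)+1) ^ d := by rw [← e2]; exact e1
              _ ≤ (1+‖x₀‖) ^ d * ((k:ℝ)+1) ^ (m : ℕ) := by
                  apply mul_le_mul_of_nonneg_left e3 (Real.rpow_nonneg (by positivity) d)
          rw [ha]
          calc (C * ((k:ℝ)+1+‖x₀‖) ^ d) * (((k:ℝ)+1) ^ p * Real.exp (-c * (k:ℝ)^2))
              ≤ (C * ((1+‖x₀‖) ^ d * ((k:ℝ)+1) ^ (m : ℕ))) *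
                (((k:ℝ)+1) ^ p * Real.exp (-c * (k:ℝ)^2)) := by
                apply mul_le_mul_of_nonneg_right _ (by positivity)
                exact mul_le_mul_of_nonneg_left h1 hC.le
            _ = (C * (1+‖x₀‖) ^ d) * (((k:ℝ)+1) ^ (m + p) * Real.exp (-c * (k:ℝ)^2)) := by
                rw [pow_add]; ring
        rw [← ENNReal.ofReal_tsum_of_nonneg ha_nonneg hsum]
        exact ENNReal.ofReal_lt_top

/-- Variation of the `F`-functional in the time parameter: if `μ` has polynomial volume
growth, then for fixed `x₀` the function `t ↦ F^{(n)}_{x₀,t}(μ)` is differentiable on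
`(0,∞)` with derivative at `t₀ > 0` equal to
`(4π t₀)^{-n/2} ∫ (‖x-x₀‖²/(4t₀²) - n/(2t₀)) exp(-‖x-x₀‖²/(4t₀)) dμ(x)`. -/
theorem F_time_derivative (n : ℕ) {E : Type*} [NormedAddCommGroup E]
    [InnerProductSpace ℝ E] [FiniteDimensional ℝ E] [MeasurableSpace E] [BorelSpace E]
    (μ : Measure E) (C d : ℝ) (hC : 0 < C) (hd : 0 ≤ d)
    (hgrowth : ∀ r : ℝ, 1 ≤ r → μ (Metric.closedBall 0 r) ≤ ENNReal.ofReal (C * r ^ d))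
    (x₀ : E) :
    ∀ t₀ : ℝ, 0 < t₀ →
      HasDerivAt (fun t : ℝ => FmeasR n μ x₀ t)
        ((4 * Real.pi * t₀) ^ (-(n : ℝ) / 2) *
          ∫ x, (‖x - x₀‖ ^ 2 / (4 * t₀ ^ 2) - n / (2 * t₀)) *
            Real.exp (-‖x - x₀‖ ^ 2 / (4 * t₀)) ∂μ)
        t₀ := by
  intro t₀ ht₀
  have hF_int : Integrable (fun x => Real.exp (-‖x - x₀‖ ^ 2 / (4 * t₀))) μ := by
    have h := integrable_pow_mul_exp μ C d hC hd hgrowth x₀ 0 (1/(4*t₀)) (by positivity)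
    refine h.congr (Filter.Eventually.of_forall fun x => ?_)
    simp only [pow_zero, one_mul]
    congr 1
    field_simp
  have key := hasDerivAt_integral_of_dominated_loc_of_deriv_le (μ := μ) (𝕜 := ℝ)
    (F := fun t x => Real.exp (-‖x - x₀‖ ^ 2 / (4 * t)))
    (F' := fun t x => (‖x - x₀‖ ^ 2 / (4 * t ^ 2)) * Real.exp (-‖x - x₀‖ ^ 2 / (4 * t)))
    (x₀ := t₀) (s := Metric.ball t₀ (t₀/2))
    (bound := fun x => (1/t₀^2) * (‖x - x₀‖^2 * Real.exp (-(1/(6*t₀)) * ‖x - x₀‖^2)))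
    (Metric.ball_mem_nhds t₀ (half_pos ht₀))
    (Filter.Eventually.of_forall fun t => (Continuous.aestronglyMeasurable (by fun_prop)))
    hF_int
    (Continuous.aestronglyMeasurable (by fun_prop))
    (Filter.Eventually.of_forall fun x => ?_)
    ((integrable_pow_mul_exp μ C d hC hd hgrowth x₀ 2 (1/(6*t₀)) (by positivity)).const_mul _)
    (Filter.Eventually.of_forall fun x => ?_)
  rotate_left
  · -- bound
    intro t htball
    rw [Metric.mem_ball, Real.dist_eq, abs_lt] at htball
    have ht : t₀/2 < t := by linarith
    have htpos : 0 < t := by linarith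
    set r := ‖x - x₀‖ with hr
    have hr0 : 0 ≤ r := norm_nonneg _
    rw [Real.norm_eq_abs, abs_of_nonneg (by positivity)]
    have h1 : r ^ 2 / (4 * t ^ 2) ≤ r ^ 2 / t₀ ^ 2 := by
      apply div_le_div_of_nonneg_left (by positivity) (by positivity)
      nlinarith
    have h2 : Real.exp (-r ^ 2 / (4 * t)) ≤ Real.exp (-(1/(6*t₀)) * r ^ 2) := by
      apply Real.exp_le_exp.2
      rw [neg_div, neg_mul, neg_le_neg_iff]
      calc 1/(6*t₀) * r ^ 2 = r ^ 2 / (6*t₀) := by ring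
        _ ≤ r ^ 2 / (4*t) := by
            apply div_le_div_of_nonneg_left (by positivity) (by positivity)
            linarith
    calc r ^ 2 / (4 * t ^ 2) * Real.exp (-r ^ 2 / (4 * t))
        ≤ r ^ 2 / t₀ ^ 2 * Real.exp (-(1/(6*t₀)) * r ^ 2) :=
          mul_le_mul h1 h2 (Real.exp_pos _).le (by positivity)
      _ = 1/t₀^2 * (r^2 * Real.exp (-(1/(6*t₀)) * r ^ 2)) := by ring
  · -- differentiability
    intro t htball
    rw [Metric.mem_ball, Real.dist_eq, abs_lt] at htball
    have htpos : 0 < t := by linarith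
    set r := ‖x - x₀‖ with hr
    have h1 : HasDerivAt (fun u : ℝ => -r ^ 2 / (4 * u)) (r ^ 2 / (4 * t ^ 2)) t := by
      have h0 := (hasDerivAt_inv htpos.ne').const_mul (-r ^ 2 / 4)
      have hfun : (fun u : ℝ => -r ^ 2 / 4 * u⁻¹) = fun u : ℝ => -r ^ 2 / (4 * u) := by
        funext u
        ring
      rw [hfun] at h0
      refine h0.congr_deriv ?_
      field_simp
    have h2 := h1.exp
    refine h2.congr_deriv ?_
    rw [mul_comm]
  obtain ⟨hF'_int, hderiv⟩ := key
  -- outer factor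
  set q : ℝ := -(n : ℝ) / 2 with hq
  have hbase : (0:ℝ) < 4 * Real.pi * t₀ := by positivity
  have hlin : HasDerivAt (fun t : ℝ => 4 * Real.pi * t) (4 * Real.pi) t₀ := by
    simpa using (hasDerivAt_id t₀).const_mul (4 * Real.pi)
  have ha : HasDerivAt (fun t : ℝ => (4 * Real.pi * t) ^ q)
      (4 * Real.pi * q * (4 * Real.pi * t₀) ^ (q - 1)) t₀ :=
    hlin.rpow_const (Or.inl hbase.ne')
  have hmul := ha.mul hderiv
  have hfun : (fun t : ℝ => FmeasR n μ x₀ t)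
      = fun t : ℝ => (4 * Real.pi * t) ^ q * ∫ x, Real.exp (-‖x - x₀‖ ^ 2 / (4 * t)) ∂μ := by
    funext t; rfl
  rw [hfun]
  refine hmul.congr_deriv ?_
  -- value equality
  have hconst_int : Integrable
      (fun x => (n : ℝ) / (2 * t₀) * Real.exp (-‖x - x₀‖ ^ 2 / (4 * t₀))) μ :=
    hF_int.const_mul _
  have hsplit : ∫ x, (‖x - x₀‖ ^ 2 / (4 * t₀ ^ 2) - n / (2 * t₀)) *
        Real.exp (-‖x - x₀‖ ^ 2 / (4 * t₀)) ∂μ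
      = (∫ x, ‖x - x₀‖ ^ 2 / (4 * t₀ ^ 2) * Real.exp (-‖x - x₀‖ ^ 2 / (4 * t₀)) ∂μ)
        - (n : ℝ) / (2 * t₀) * ∫ x, Real.exp (-‖x - x₀‖ ^ 2 / (4 * t₀)) ∂μ := by
    rw [← integral_const_mul, ← integral_sub hF'_int hconst_int]
    congr 1
    funext x
    ring
  rw [hsplit]
  have hpow : (4 * Real.pi * t₀) ^ (q - 1) = (4 * Real.pi * t₀) ^ q / (4 * Real.pi * t₀) := by
    rw [Real.rpow_sub hbase, Real.rpow_one]
  rw [hpow, hq]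
  field_simp
  ring
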